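/- Let m < 0 and σ > 0. Then sInf { P {x : x ≤ 0} : P is a Borel probability measure on ℝ with finite second moment, mean m and variance σ² } = m²/(m² + σ²). -/

import Mathlib

open MeasureTheory

lemma integrable_dirac'' {f : ℝ → ℝ} (hf : Measurable f) (a : ℝ) :
    Integrable f (Measure.dirac a) := by
  refine ⟨hf.aestronglyMeasurable, ?_⟩
  rw [HasFiniteIntegral, lintegral_dirac' _ (by measurability)]
  exact ENNReal.coe_lt_top

lemma integral_two_point {f : ℝ → ℝ} (hf : Measurable f) {p q : ℝ} (hp : 0 ≤ p) (hq : 0 ≤ q)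
    (a b : ℝ) :
    ∫ x, f x ∂((ENNReal.ofReal p) • Measure.dirac a + (ENNReal.ofReal q) • Measure.dirac b)
      = p * f a + q * f b := by
  rw [integral_add_measure
      ((integrable_dirac'' hf a).smul_measure ENNReal.ofReal_ne_top)
      ((integrable_dirac'' hf b).smul_measure ENNReal.ofReal_ne_top),
    integral_smul_measure, integral_smul_measure, integral_dirac, integral_dirac]
  simp [ENNReal.toReal_ofReal hp, ENNReal.toReal_ofReal hq]

lemma integrable_two_point {f : ℝ → ℝ} (hf : Measurable f) {p q : ℝ} (a b : ℝ) :
    Integrable f ((ENNReal.ofReal p) • Measure.dirac a + (ENNReal.ofReal q) • Measure.dirac b) :=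
  ((integrable_dirac'' hf a).smul_measure ENNReal.ofReal_ne_top).add_measure
    ((integrable_dirac'' hf b).smul_measure ENNReal.ofReal_ne_top)

lemma two_point_mem (m σ v : ℝ) (hm : m < 0) (hσ : 0 < σ) (hv : -m < v) :
    ∃ P : Measure ℝ, IsProbabilityMeasure P ∧
        MemLp id 2 P ∧ (∫ x, x ∂P) = m ∧ (∫ x, (x - m) ^ 2 ∂P) = σ ^ 2 ∧
        v ^ 2 / (v ^ 2 + σ ^ 2) = (P {x : ℝ | x ≤ 0}).toReal := by
  have hv0 : 0 < v := lt_trans (by linarith) hv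
  have hd : 0 < v ^ 2 + σ ^ 2 := by positivity
  set p : ℝ := v ^ 2 / (v ^ 2 + σ ^ 2) with hpdef
  set q : ℝ := σ ^ 2 / (v ^ 2 + σ ^ 2) with hqdef
  have hp : 0 ≤ p := by positivity
  have hq : 0 ≤ q := by positivity
  have hpq : p + q = 1 := by rw [hpdef, hqdef]; field_simp
  set a : ℝ := m - σ ^ 2 / v with hadef
  set b : ℝ := m + v with hbdef
  have hsv : 0 < σ ^ 2 / v := by positivity
  have ha : a ≤ 0 := by rw [hadef]; linarith
  have hb : 0 < b := by rw [hbdef]; linarith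
  refine ⟨(ENNReal.ofReal p) • Measure.dirac a + (ENNReal.ofReal q) • Measure.dirac b,
    ?_, ?_, ?_, ?_, ?_⟩
  · constructor
    rw [Measure.add_apply, Measure.smul_apply, Measure.smul_apply, measure_univ, measure_univ,
      smul_eq_mul, smul_eq_mul, mul_one, mul_one, ← ENNReal.ofReal_add hp hq, hpq,
      ENNReal.ofReal_one]
  · refine (memLp_two_iff_integrable_sq aestronglyMeasurable_id).2 ?_
    exact integrable_two_point (by measurability) a b
  · rw [integral_two_point (f := fun x => x) measurable_id hp hq a b,
      hpdef, hqdef, hadef, hbdef]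
    field_simp
    ring
  · rw [integral_two_point (by measurability) hp hq a b]
    have : a - m = -(σ ^ 2 / v) := by rw [hadef]; ring
    rw [this, hbdef, hpdef, hqdef]
    field_simp
    ring
  · have hmeas : MeasurableSet {x : ℝ | x ≤ 0} := measurableSet_Iic
    rw [Measure.add_apply, Measure.smul_apply, Measure.smul_apply,
      Measure.dirac_apply' _ hmeas, Measure.dirac_apply' _ hmeas]
    have h1 : ({x : ℝ | x ≤ 0}).indicator (1 : ℝ → ENNReal) a = 1 := by
      simp only [Set.indicator_of_mem (show a ∈ {x : ℝ | x ≤ 0} from ha), Pi.one_apply]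
    have h2 : ({x : ℝ | x ≤ 0}).indicator (1 : ℝ → ENNReal) b = 0 := by
      simp only [Set.indicator_of_notMem (show b ∉ {x : ℝ | x ≤ 0} from not_le.2 hb)]
    rw [h1, h2, smul_eq_mul, smul_eq_mul, mul_one, mul_zero, add_zero,
      ENNReal.toReal_ofReal hp]

lemma cantelli_bound (m σ : ℝ) (hm : m < 0) (hσ : 0 < σ) (P : Measure ℝ)
    (h1 : IsProbabilityMeasure P) (h2 : MemLp id 2 P) (h3 : (∫ x, x ∂P) = m)
    (h4 : (∫ x, (x - m) ^ 2 ∂P) = σ ^ 2) :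
    m ^ 2 / (m ^ 2 + σ ^ 2) ≤ (P {x : ℝ | x ≤ 0}).toReal := by
  have intX : Integrable (fun x : ℝ => x) P := h2.integrable (by norm_num)
  have intSq : Integrable (fun x : ℝ => x ^ 2) P := by
    have := h2.integrable_sq
    simpa using this
  set t : ℝ := -m with ht
  have ht0 : 0 < t := by rw [ht]; linarith
  set u : ℝ := σ ^ 2 / t with hu
  have hu0 : 0 < u := by positivity
  -- second moment
  have hsec : (∫ x, x ^ 2 ∂P) = σ ^ 2 + m ^ 2 := by
    have expand : (fun x : ℝ => (x - m) ^ 2) = fun x => x ^ 2 + (-(2 * m)) * x + m ^ 2 := by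
      funext x; ring
    rw [expand] at h4
    have intLin : Integrable (fun x : ℝ => -(2 * m) * x) P := intX.const_mul _
    have e1 : (∫ x, (x ^ 2 + -(2 * m) * x) + m ^ 2 ∂P)
        = (∫ x, x ^ 2 + -(2 * m) * x ∂P) + ∫ _, m ^ 2 ∂P :=
      integral_add (intSq.add intLin) (integrable_const _)
    have e2 : (∫ x, x ^ 2 + -(2 * m) * x ∂P)
        = (∫ x, x ^ 2 ∂P) + ∫ x, -(2 * m) * x ∂P := integral_add intSq intLin
    rw [e1, e2, integral_const_mul _ _, h3, integral_const, probReal_univ] at h4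
    simp at h4
    linarith
  -- integral of (x - m + u)^2
  set f : ℝ → ℝ := fun x => (x - m + u) ^ 2 with hf
  have hfe : f = fun x => x ^ 2 + (2 * (u - m)) * x + (u - m) ^ 2 := by
    funext x; rw [hf]; ring
  have intf : Integrable f P := by
    rw [hfe]; exact (intSq.add (intX.const_mul _)).add (integrable_const _)
  have hfint : (∫ x, f x ∂P) = σ ^ 2 + u ^ 2 := by
    have intLin : Integrable (fun x : ℝ => 2 * (u - m) * x) P := intX.const_mul _
    have e1 : (∫ x, (x ^ 2 + 2 * (u - m) * x) + (u - m) ^ 2 ∂P)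
        = (∫ x, x ^ 2 + 2 * (u - m) * x ∂P) + ∫ _, (u - m) ^ 2 ∂P :=
      integral_add (intSq.add intLin) (integrable_const _)
    have e2 : (∫ x, x ^ 2 + 2 * (u - m) * x ∂P)
        = (∫ x, x ^ 2 ∂P) + ∫ x, 2 * (u - m) * x ∂P := integral_add intSq intLin
    rw [hfe, e1, e2, integral_const_mul _ _, h3, hsec, integral_const, probReal_univ]
    simp
    ring
  -- Markov step
  have hmeaspos : MeasurableSet {x : ℝ | 0 < x} := measurableSet_Ioi
  have markov : (P {x : ℝ | 0 < x}).toReal * (t + u) ^ 2 ≤ σ ^ 2 + u ^ 2 := by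
    have step1 : (∫ x in {x : ℝ | 0 < x}, (t + u) ^ 2 ∂P) ≤ ∫ x in {x : ℝ | 0 < x}, f x ∂P := by
      refine setIntegral_mono_on (integrableOn_const (measure_ne_top _ _))
        (intf.integrableOn) hmeaspos ?_
      intro x hx
      have hx0 : 0 < x := hx
      have : t + u ≤ x - m + u := by rw [ht]; linarith
      exact pow_le_pow_left₀ (by positivity) this 2
    have step2 : (∫ x in {x : ℝ | 0 < x}, f x ∂P) ≤ ∫ x, f x ∂P := by
      refine setIntegral_le_integral intf (Filter.Eventually.of_forall fun x => ?_)
      rw [hf]; positivity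
    rw [setIntegral_const, smul_eq_mul, measureReal_def] at step1
    linarith [hfint ▸ le_trans step1 step2]
  -- complement
  have hPle : P {x : ℝ | 0 < x} ≤ 1 := prob_le_one
  have hcompl : (P {x : ℝ | x ≤ 0}).toReal = 1 - (P {x : ℝ | 0 < x}).toReal := by
    have hset : {x : ℝ | x ≤ 0} = {x : ℝ | 0 < x}ᶜ := by ext x; simp [not_lt]
    rw [hset, prob_compl_eq_one_sub hmeaspos, ENNReal.toReal_sub_of_le hPle ENNReal.one_ne_top,
      ENNReal.toReal_one]
  rw [hcompl]
  -- final arithmetic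
  set PR : ℝ := (P {x : ℝ | 0 < x}).toReal with hPR
  have hPRle : PR ≤ σ ^ 2 / (m ^ 2 + σ ^ 2) := by
    have htu : t + u = (m ^ 2 + σ ^ 2) / t := by rw [hu]; field_simp; ring
    rw [le_div_iff₀ (by positivity)]
    have h1' : PR * ((m ^ 2 + σ ^ 2) / t) ^ 2 ≤ σ ^ 2 + (σ ^ 2 / t) ^ 2 := by
      rw [← htu, ← hu]; exact markov
    have ht2 : t ^ 2 = m ^ 2 := by rw [ht]; ring
    rw [div_pow, div_pow, ht2] at h1'
    have hm2 : (0:ℝ) < m ^ 2 := by nlinarith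
    have h2' : PR * (m ^ 2 + σ ^ 2) ^ 2 ≤ σ ^ 2 * m ^ 2 + (σ ^ 2) ^ 2 := by
      have := mul_le_mul_of_nonneg_right h1' hm2.le
      rw [mul_assoc, div_mul_cancel₀ _ hm2.ne', add_mul, div_mul_cancel₀ _ hm2.ne'] at this
      linarith
    have hd : (0:ℝ) < m ^ 2 + σ ^ 2 := by positivity
    nlinarith [h2', hd, mul_le_mul_of_nonneg_right h2' hd.le]
  have hd : (0:ℝ) < m ^ 2 + σ ^ 2 := by positivity
  rw [div_le_iff₀ hd]
  have := (le_div_iff₀ hd).1 hPRle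
  linarith

theorem worst_case_probability_closed_form
    (m σ : ℝ) (hm : m < 0) (hσ : 0 < σ) :
    sInf { v : ℝ | ∃ P : Measure ℝ, IsProbabilityMeasure P ∧
        MemLp id 2 P ∧ (∫ x, x ∂P) = m ∧ (∫ x, (x - m) ^ 2 ∂P) = σ ^ 2 ∧
        v = (P {x : ℝ | x ≤ 0}).toReal } =
    m ^ 2 / (m ^ 2 + σ ^ 2) := by
  set S := { v : ℝ | ∃ P : Measure ℝ, IsProbabilityMeasure P ∧
        MemLp id 2 P ∧ (∫ x, x ∂P) = m ∧ (∫ x, (x - m) ^ 2 ∂P) = σ ^ 2 ∧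
        v = (P {x : ℝ | x ≤ 0}).toReal } with hS
  have hmem : ∀ v : ℝ, -m < v → v ^ 2 / (v ^ 2 + σ ^ 2) ∈ S := by
    intro v hv
    obtain ⟨P, k1, k2, k3, k4, k5⟩ := two_point_mem m σ v hm hσ hv
    exact ⟨P, k1, k2, k3, k4, k5⟩
  have hne : S.Nonempty := ⟨_, hmem (-m + 1) (by linarith)⟩
  have hlb : ∀ x ∈ S, m ^ 2 / (m ^ 2 + σ ^ 2) ≤ x := by
    rintro x ⟨P, h1, h2, h3, h4, rfl⟩
    exact cantelli_bound m σ hm hσ P h1 h2 h3 h4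
  have hbdd : BddBelow S := ⟨_, hlb⟩
  refine le_antisymm ?_ (le_csInf hne hlb)
  refine le_of_forall_pos_le_add fun ε hε => ?_
  have hd : (0:ℝ) < m ^ 2 + σ ^ 2 := by positivity
  have h12m : (0:ℝ) < 1 - 2 * m := by linarith
  set δ : ℝ := min 1 (ε * (m ^ 2 + σ ^ 2) / (1 - 2 * m)) with hδdef
  have hδ0 : 0 < δ := lt_min one_pos (by positivity)
  have hδ1 : δ ≤ 1 := min_le_left _ _
  have hδ2 : δ * (1 - 2 * m) ≤ ε * (m ^ 2 + σ ^ 2) := by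
    have h := min_le_right 1 (ε * (m ^ 2 + σ ^ 2) / (1 - 2 * m))
    rw [← hδdef, le_div_iff₀ h12m] at h
    linarith
  set v : ℝ := -m + δ with hvdef
  have hv : -m < v := by rw [hvdef]; linarith
  have hkey : v ^ 2 / (v ^ 2 + σ ^ 2) ≤ m ^ 2 / (m ^ 2 + σ ^ 2) + ε := by
    have hvd : (0:ℝ) < v ^ 2 + σ ^ 2 := by positivity
    have hid : v ^ 2 / (v ^ 2 + σ ^ 2) - m ^ 2 / (m ^ 2 + σ ^ 2)
        = σ ^ 2 * (v ^ 2 - m ^ 2) / ((v ^ 2 + σ ^ 2) * (m ^ 2 + σ ^ 2)) := by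
      field_simp
      ring
    have hvm : v ^ 2 - m ^ 2 ≤ δ * (1 - 2 * m) := by
      rw [hvdef]; nlinarith
    have hq : σ ^ 2 * (v ^ 2 - m ^ 2) / ((v ^ 2 + σ ^ 2) * (m ^ 2 + σ ^ 2)) ≤ ε := by
      rw [div_le_iff₀ (by positivity)]
      have e1 : σ ^ 2 * (v ^ 2 - m ^ 2) ≤ σ ^ 2 * (δ * (1 - 2 * m)) :=
        mul_le_mul_of_nonneg_left hvm (sq_nonneg σ)
      have e2 : σ ^ 2 * (δ * (1 - 2 * m)) ≤ σ ^ 2 * (ε * (m ^ 2 + σ ^ 2)) :=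
        mul_le_mul_of_nonneg_left hδ2 (sq_nonneg σ)
      have e3 : σ ^ 2 ≤ v ^ 2 + σ ^ 2 := by nlinarith [sq_nonneg v]
      nlinarith [mul_le_mul_of_nonneg_right e3 (by positivity : (0:ℝ) ≤ ε * (m ^ 2 + σ ^ 2))]
    linarith
  exact le_trans (csInf_le hbdd (hmem v hv)) hkey
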